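/- arXiv:2106.10049 — 2 statements merged into one kernel-verified Lean document; each statement's English description precedes it below -/
import Mathlib

section
/- Every 2-moplex graph is AT-free, i.e., a graph with at most two moplexes contains no asteroidal triple. -/
open SimpleGraph

namespace MoplexPaper

variable {V : Type*}

/-- Reachability in `G - S`: a walk from `u` to `v` all of whose vertices avoid `S`. -/
def ReachOutside (G : SimpleGraph V) (S : Set V) (u v : V) : Prop :=
  ∃ p : G.Walk u v, ∀ x ∈ p.support, x ∉ S

/-- `S` is a `u,v`-separator. -/
def IsSeparator (G : SimpleGraph V) (u v : V) (S : Set V) : Prop :=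
  ¬ G.Adj u v ∧ u ∉ S ∧ v ∉ S ∧ ¬ ReachOutside G S u v

/-- `S` is a minimal `u,v`-separator. -/
def IsMinSeparator (G : SimpleGraph V) (u v : V) (S : Set V) : Prop :=
  IsSeparator G u v S ∧ ∀ T ⊂ S, ¬ IsSeparator G u v T

/-- `S` is a minimal separator of `G`. -/
def IsMinimalSeparator (G : SimpleGraph V) (S : Set V) : Prop :=
  ∃ u v, u ≠ v ∧ IsMinSeparator G u v S

/-- The (open) neighbourhood of a set of vertices. -/
def setNbhd (G : SimpleGraph V) (X : Set V) : Set V :=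
  {v | v ∉ X ∧ ∃ x ∈ X, G.Adj v x}

/-- The closed neighbourhood of a vertex. -/
def closedNbhd (G : SimpleGraph V) (v : V) : Set V :=
  insert v (G.neighborSet v)

/-- `M` is a module of `G`. -/
def IsModule (G : SimpleGraph V) (M : Set V) : Prop :=
  ∀ v ∉ M, (∀ x ∈ M, G.Adj v x) ∨ (∀ x ∈ M, ¬ G.Adj v x)

/-- `M` is a clique module of `G`. -/
def IsCliqueModule (G : SimpleGraph V) (M : Set V) : Prop :=
  G.IsClique M ∧ IsModule G M

/-- `X` is a moplex of `G`: an inclusion-maximal clique module whose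
neighbourhood is empty or a minimal separator. -/
def IsMoplex (G : SimpleGraph V) (X : Set V) : Prop :=
  X.Nonempty ∧ IsCliqueModule G X ∧
  (∀ Y, X ⊆ Y → IsCliqueModule G Y → Y = X) ∧
  (setNbhd G X = ∅ ∨ IsMinimalSeparator G (setNbhd G X))

/-- A vertex is moplicial if it belongs to a moplex. -/
def Moplicial (G : SimpleGraph V) (v : V) : Prop := ∃ X, IsMoplex G X ∧ v ∈ X

/-- An extension of `v`: an induced `P₃` with midpoint `v`. -/
def IsExtension (G : SimpleGraph V) (v a b : V) : Prop :=
  a ≠ b ∧ G.Adj v a ∧ G.Adj v b ∧ ¬ G.Adj a b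

/-- A cycle is induced if the only edges of `G` among its vertices are its own edges. -/
def IsInducedCycle (G : SimpleGraph V) {w : V} (c : G.Walk w w) : Prop :=
  c.IsCycle ∧ ∀ x ∈ c.support, ∀ y ∈ c.support, G.Adj x y → s(x, y) ∈ c.edges

/-- `v` is avoidable: every extension of `v` is contained in an induced cycle. -/
def Avoidable (G : SimpleGraph V) (v : V) : Prop :=
  ∀ a b, IsExtension G v a b →
    ∃ (w : V) (c : G.Walk w w), IsInducedCycle G c ∧
      a ∈ c.support ∧ v ∈ c.support ∧ b ∈ c.support

/-- `A` is an asteroidal set of `G`. -/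
def IsAsteroidal (G : SimpleGraph V) (A : Set V) : Prop :=
  ∀ a ∈ A, ∀ x ∈ A, ∀ y ∈ A, x ≠ a → y ≠ a →
    ReachOutside G (closedNbhd G a) x y

/-- `G` is AT-free: it has no asteroidal triple. -/
def ATFree (G : SimpleGraph V) : Prop :=
  ¬ ∃ A : Set V, IsAsteroidal G A ∧ A.ncard = 3

/-- `G` has exactly the two moplexes `U` and `W`. -/
def HasExactlyTwoMoplexes (G : SimpleGraph V) (U W : Set V) : Prop :=
  IsMoplex G U ∧ IsMoplex G W ∧ U ≠ W ∧ ∀ X, IsMoplex G X → X = U ∨ X = W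

/-- `G` is not complete. -/
def NonComplete (G : SimpleGraph V) : Prop :=
  ∃ x y : V, x ≠ y ∧ ¬ G.Adj x y

section TwoMoplexProof

/-! ### Basic membership lemmas -/

lemma mem_closedNbhd {G : SimpleGraph V} {u z : V} :
    z ∈ closedNbhd G u ↔ z = u ∨ G.Adj u z := by
  simp [closedNbhd]

lemma self_mem_closedNbhd (G : SimpleGraph V) (u : V) : u ∈ closedNbhd G u :=
  mem_closedNbhd.mpr (Or.inl rfl)

lemma mem_setNbhd {G : SimpleGraph V} {X : Set V} {w : V} :
    w ∈ setNbhd G X ↔ w ∉ X ∧ ∃ x ∈ X, G.Adj w x := Iff.rfl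

lemma mem_setNbhd_of_adj {G : SimpleGraph V} {X : Set V} {w x : V}
    (hw : w ∉ X) (hx : x ∈ X) (h : G.Adj w x) : w ∈ setNbhd G X :=
  mem_setNbhd.mpr ⟨hw, x, hx, h⟩

lemma notMem_of_mem_setNbhd {G : SimpleGraph V} {X : Set V} {w : V}
    (h : w ∈ setNbhd G X) : w ∉ X := (mem_setNbhd.mp h).1

lemma closedNbhd_subset {G : SimpleGraph V} {C : Set V} {u : V} (hu : u ∈ C) :
    closedNbhd G u ⊆ C ∪ setNbhd G C := by
  intro z hz
  rcases mem_closedNbhd.mp hz with rfl | hadj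
  · exact Or.inl hu
  · by_cases hzC : z ∈ C
    · exact Or.inl hzC
    · exact Or.inr (mem_setNbhd_of_adj hzC hu hadj.symm)

/-! ### Reachability lemmas -/

lemma reach_self {G : SimpleGraph V} {B : Set V} {u : V} (h : u ∉ B) :
    ReachOutside G B u u := by
  refine ⟨SimpleGraph.Walk.nil, ?_⟩
  intro x hx
  rw [SimpleGraph.Walk.support_nil, List.mem_singleton] at hx
  subst hx; exact h

lemma reach_notMem_left {G : SimpleGraph V} {B : Set V} {u v : V}
    (h : ReachOutside G B u v) : u ∉ B := by
  obtain ⟨p, hp⟩ := h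
  exact hp u p.start_mem_support

lemma reach_notMem_right {G : SimpleGraph V} {B : Set V} {u v : V}
    (h : ReachOutside G B u v) : v ∉ B := by
  obtain ⟨p, hp⟩ := h
  exact hp v p.end_mem_support

lemma reach_trans {G : SimpleGraph V} {B : Set V} {u v w : V}
    (h1 : ReachOutside G B u v) (h2 : ReachOutside G B v w) : ReachOutside G B u w := by
  obtain ⟨p, hp⟩ := h1
  obtain ⟨q, hq⟩ := h2
  refine ⟨p.append q, ?_⟩
  intro x hx
  rw [SimpleGraph.Walk.support_append] at hx
  rcases List.mem_append.mp hx with h | h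
  · exact hp x h
  · exact hq x (List.mem_of_mem_tail h)

lemma reach_extend {G : SimpleGraph V} {B : Set V} {u v w : V}
    (h : ReachOutside G B u v) (ha : G.Adj v w) (hw : w ∉ B) : ReachOutside G B u w := by
  refine reach_trans h ⟨SimpleGraph.Walk.cons ha SimpleGraph.Walk.nil, ?_⟩
  intro x hx
  rw [SimpleGraph.Walk.support_cons] at hx
  rcases List.mem_cons.mp hx with rfl | hx
  · exact reach_notMem_right h
  · rw [SimpleGraph.Walk.support_nil, List.mem_singleton] at hx
    subst hx; exact hw

/-! ### Reach sets -/

/-- The set of vertices reachable from `u` by walks avoiding `B`. -/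
def RS (G : SimpleGraph V) (B : Set V) (u : V) : Set V := {w | ReachOutside G B u w}

lemma mem_RS {G : SimpleGraph V} {B : Set V} {u w : V} :
    w ∈ RS G B u ↔ ReachOutside G B u w := Iff.rfl

lemma RS_notMem_B {G : SimpleGraph V} {B : Set V} {u w : V} (hw : w ∈ RS G B u) : w ∉ B :=
  reach_notMem_right (mem_RS.mp hw)

lemma base_mem_RS {G : SimpleGraph V} {B : Set V} {u : V} (h : u ∉ B) : u ∈ RS G B u :=
  mem_RS.mpr (reach_self h)

lemma RS_extend {G : SimpleGraph V} {B : Set V} {u w z : V}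
    (hw : w ∈ RS G B u) (ha : G.Adj w z) (hz : z ∉ B) : z ∈ RS G B u :=
  mem_RS.mpr (reach_extend (mem_RS.mp hw) ha hz)

lemma exists_walk_in_RS {G : SimpleGraph V} {B : Set V} {u w : V} (hw : w ∈ RS G B u) :
    ∃ p : G.Walk u w, ∀ x ∈ p.support, x ∈ RS G B u := by
  classical
  obtain ⟨p, hp⟩ := mem_RS.mp hw
  refine ⟨p, fun x hx => mem_RS.mpr ⟨p.takeUntil x hx, fun y hy => hp y (p.support_takeUntil_subset hx hy)⟩⟩

lemma RS_conn {G : SimpleGraph V} {B : Set V} {u : V} :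
    ∀ x ∈ RS G B u, ∀ y ∈ RS G B u, ∃ p : G.Walk x y, ∀ z ∈ p.support, z ∈ RS G B u := by
  intro x hx y hy
  obtain ⟨p, hp⟩ := exists_walk_in_RS hx
  obtain ⟨q, hq⟩ := exists_walk_in_RS hy
  refine ⟨p.reverse.append q, ?_⟩
  intro z hz
  rw [SimpleGraph.Walk.support_append] at hz
  rcases List.mem_append.mp hz with h | h
  · rw [SimpleGraph.Walk.support_reverse] at h
    exact hp z (List.mem_reverse.mp h)
  · exact hq z (List.mem_of_mem_tail h)

/-! ### Walks staying inside a set -/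

lemma walk_stay_general {G : SimpleGraph V} {C B : Set V}
    (hstep : ∀ c ∈ C, ∀ w, G.Adj c w → w ∉ B → w ∈ C) :
    ∀ {u v : V} (p : G.Walk u v), u ∈ C → (∀ x ∈ p.support, x ∉ B) → v ∈ C := by
  intro u v p
  induction p with
  | nil => intro h _; exact h
  | @cons a b c hadj q ih =>
    intro ha hsup
    have hb : b ∈ C := hstep a ha b hadj
      (hsup b (by rw [SimpleGraph.Walk.support_cons]; exact List.mem_cons_of_mem _ q.start_mem_support))
    exact ih hb fun x hx => hsup x (by rw [SimpleGraph.Walk.support_cons]; exact List.mem_cons_of_mem _ hx)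

lemma walk_stay {G : SimpleGraph V} {C : Set V} {u v : V} (p : G.Walk u v)
    (hu : u ∈ C) (hp : ∀ x ∈ p.support, x ∉ setNbhd G C) : v ∈ C := by
  classical
  refine walk_stay_general ?_ p hu hp
  intro cc hcc w hadj hwB
  by_cases hwC : w ∈ C
  · exact hwC
  · exact absurd (mem_setNbhd_of_adj hwC hcc hadj.symm) hwB
/-! ### Saturation -/

/-- `H` with `S` turned into a clique. -/
def satur (H : SimpleGraph V) (S : Set V) : SimpleGraph V where
  Adj a b := H.Adj a b ∨ (a ≠ b ∧ a ∈ S ∧ b ∈ S)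
  symm := by
    constructor
    rintro a b (h | ⟨hne, ha, hb⟩)
    · exact Or.inl h.symm
    · exact Or.inr ⟨hne.symm, hb, ha⟩
  loopless := by
    constructor
    rintro a (h | ⟨hne, _⟩)
    · exact H.loopless.irrefl a h
    · exact hne rfl

lemma satur_adj {H : SimpleGraph V} {S : Set V} {a b : V} :
    (satur H S).Adj a b ↔ H.Adj a b ∨ (a ≠ b ∧ a ∈ S ∧ b ∈ S) := Iff.rfl

lemma satur_adj_left {H : SimpleGraph V} {S : Set V} {a b : V} (ha : a ∉ S) :
    (satur H S).Adj a b ↔ H.Adj a b := by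
  rw [satur_adj]
  exact or_iff_left fun h => ha h.2.1

lemma satur_adj_right {H : SimpleGraph V} {S : Set V} {a b : V} (hb : b ∉ S) :
    (satur H S).Adj a b ↔ H.Adj a b := by
  rw [satur_adj]
  exact or_iff_left fun h => hb h.2.2

lemma walk_up {H H₂ : SimpleGraph V} (hle : ∀ a b, H.Adj a b → H₂.Adj a b) :
    ∀ {u v : V} (p : H.Walk u v), ∃ q : H₂.Walk u v, ∀ x ∈ q.support, x ∈ p.support := by
  intro u v p
  induction p with
  | nil => exact ⟨SimpleGraph.Walk.nil, fun x hx => hx⟩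
  | @cons a b c hadj q ih =>
    obtain ⟨q', hq'⟩ := ih
    refine ⟨SimpleGraph.Walk.cons (hle _ _ hadj) q', fun x hx => ?_⟩
    rw [SimpleGraph.Walk.support_cons] at hx ⊢
    rcases List.mem_cons.mp hx with rfl | hx
    · exact List.mem_cons_self
    · exact List.mem_cons_of_mem _ (hq' x hx)

lemma reach_up {H H₂ : SimpleGraph V} (hle : ∀ a b, H.Adj a b → H₂.Adj a b)
    {B : Set V} {u v : V} (h : ReachOutside H B u v) : ReachOutside H₂ B u v := by
  obtain ⟨p, hp⟩ := h
  obtain ⟨q, hq⟩ := walk_up hle p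
  exact ⟨q, fun x hx => hp x (hq x hx)⟩

lemma walk_down {H : SimpleGraph V} {S K : Set V}
    (hKfull : ∀ s ∈ S, ∃ k ∈ K, H.Adj s k)
    (hKconn : ∀ k ∈ K, ∀ k' ∈ K, ∃ p : H.Walk k k', ∀ z ∈ p.support, z ∈ K) :
    ∀ {u v : V} (p : (satur H S).Walk u v),
      ∃ q : H.Walk u v, ∀ x ∈ q.support, x ∈ p.support ∨ x ∈ K := by
  intro u v p
  induction p with
  | nil => exact ⟨SimpleGraph.Walk.nil, fun x hx => Or.inl hx⟩
  | @cons a b c hadj q ih =>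
    obtain ⟨q', hq'⟩ := ih
    have hmem : ∀ x ∈ q'.support, x ∈ (SimpleGraph.Walk.cons hadj q).support ∨ x ∈ K := by
      intro x hx
      rcases hq' x hx with hx' | hx'
      · exact Or.inl (by rw [SimpleGraph.Walk.support_cons]; exact List.mem_cons_of_mem _ hx')
      · exact Or.inr hx'
    rcases hadj with hadj' | ⟨hne, haS, hbS⟩
    · refine ⟨SimpleGraph.Walk.cons hadj' q', fun x hx => ?_⟩
      rw [SimpleGraph.Walk.support_cons] at hx
      rcases List.mem_cons.mp hx with rfl | hx
      · exact Or.inl (SimpleGraph.Walk.start_mem_support _)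
      · exact hmem x hx
    · obtain ⟨k₁, hk₁, ha₁⟩ := hKfull a haS
      obtain ⟨k₂, hk₂, ha₂⟩ := hKfull b hbS
      obtain ⟨r, hr⟩ := hKconn k₁ hk₁ k₂ hk₂
      refine ⟨SimpleGraph.Walk.cons ha₁ (r.append (SimpleGraph.Walk.cons ha₂.symm q')), fun x hx => ?_⟩
      rw [SimpleGraph.Walk.support_cons] at hx
      rcases List.mem_cons.mp hx with rfl | hx
      · exact Or.inl (SimpleGraph.Walk.start_mem_support _)
      · rw [SimpleGraph.Walk.support_append] at hx
        rcases List.mem_append.mp hx with hx | hx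
        · exact Or.inr (hr x hx)
        · rw [SimpleGraph.Walk.support_cons, List.tail_cons] at hx
          exact hmem x hx

/-! ### Clique modules and twin classes -/

lemma cliqueModule_closedNbhd_eq {G : SimpleGraph V} {Y : Set V} (hY : IsCliqueModule G Y)
    {y y' : V} (hy : y ∈ Y) (hy' : y' ∈ Y) : closedNbhd G y = closedNbhd G y' := by
  ext z
  rw [mem_closedNbhd, mem_closedNbhd]
  by_cases hz : z ∈ Y
  · have h1 : z = y ∨ G.Adj y z := by
      by_cases h : z = y
      · exact Or.inl h
      · exact Or.inr (hY.1 hy hz fun e => h e.symm)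
    have h2 : z = y' ∨ G.Adj y' z := by
      by_cases h : z = y'
      · exact Or.inl h
      · exact Or.inr (hY.1 hy' hz fun e => h e.symm)
    exact iff_of_true h1 h2
  · rcases hY.2 z hz with hall | hnone
    · exact iff_of_true (Or.inr (hall y hy).symm) (Or.inr (hall y' hy').symm)
    · refine iff_of_false ?_ ?_
      · rintro (rfl | hadj)
        · exact hz hy
        · exact hnone y hy hadj.symm
      · rintro (rfl | hadj)
        · exact hz hy'
        · exact hnone y' hy' hadj.symm

/-- The true-twin class of a vertex. -/
def TC (G : SimpleGraph V) (x₀ : V) : Set V := {t | closedNbhd G t = closedNbhd G x₀}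

lemma mem_TC {G : SimpleGraph V} {x₀ t : V} :
    t ∈ TC G x₀ ↔ closedNbhd G t = closedNbhd G x₀ := Iff.rfl

lemma mem_TC_self {G : SimpleGraph V} (x₀ : V) : x₀ ∈ TC G x₀ := mem_TC.mpr rfl

lemma TC_cliqueModule (G : SimpleGraph V) (x₀ : V) : IsCliqueModule G (TC G x₀) := by
  constructor
  · intro t ht t' ht' hne
    have h1 : t' ∈ closedNbhd G t := by
      rw [mem_TC.mp ht, ← mem_TC.mp ht']
      exact self_mem_closedNbhd G t'
    rcases mem_closedNbhd.mp h1 with h | h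
    · exact absurd h.symm hne
    · exact h
  · intro v hv
    by_cases hadj : G.Adj v x₀
    · left
      intro t ht
      have h1 : v ∈ closedNbhd G t := by
        rw [mem_TC.mp ht]
        exact mem_closedNbhd.mpr (Or.inr hadj.symm)
      rcases mem_closedNbhd.mp h1 with h | h
      · exact absurd (by rw [h]; exact ht) hv
      · exact h.symm
    · right
      intro t ht hvt
      have h1 : v ∈ closedNbhd G x₀ := by
        rw [← mem_TC.mp ht]
        exact mem_closedNbhd.mpr (Or.inr hvt.symm)
      rcases mem_closedNbhd.mp h1 with h | h
      · exact hv (by rw [h]; exact mem_TC_self (G := G) x₀)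
      · exact hadj h.symm

lemma moplex_eq_TC {G : SimpleGraph V} {X : Set V} {x₀ : V}
    (hX : IsMoplex G X) (hx₀ : x₀ ∈ X) : X = TC G x₀ := by
  have hsub : X ⊆ TC G x₀ := fun t ht =>
    mem_TC.mpr (cliqueModule_closedNbhd_eq hX.2.1 ht hx₀)
  exact (hX.2.2.1 (TC G x₀) hsub (TC_cliqueModule G x₀)).symm
/-! ### Transferring a moplex from the saturated graph back -/

lemma moplex_transfer {H : SimpleGraph V} {C K X : Set V}
    (hKC : ∀ k ∈ K, k ∉ C) (hKS : ∀ k ∈ K, k ∉ setNbhd H C)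
    (hKfull : ∀ s ∈ setNbhd H C, ∃ k ∈ K, H.Adj s k)
    (hKconn : ∀ k ∈ K, ∀ k' ∈ K, ∃ p : H.Walk k k', ∀ z ∈ p.support, z ∈ K)
    (hXC : X ⊆ C)
    (hX : IsMoplex (satur H (setNbhd H C)) X) : IsMoplex H X := by
  classical
  have hCS : ∀ u ∈ C, u ∉ setNbhd H C := fun u hu h => (mem_setNbhd.mp h).1 hu
  have f1 : ∀ u ∈ C, ∀ w, ((satur H (setNbhd H C)).Adj u w ↔ H.Adj u w) := by
    intro u hu w
    exact satur_adj_left (hCS u hu)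
  have f1' : ∀ u ∈ C, ∀ w, ((satur H (setNbhd H C)).Adj w u ↔ H.Adj w u) := by
    intro u hu w
    exact satur_adj_right (hCS u hu)
  obtain ⟨x₀, hx₀⟩ := hX.1
  have hx₀C : x₀ ∈ C := hXC hx₀
  have fN : ∀ u ∈ C, closedNbhd (satur H (setNbhd H C)) u = closedNbhd H u := by
    intro u hu
    ext z
    rw [mem_closedNbhd, mem_closedNbhd, f1 u hu z]
  have hXTC' : X = TC (satur H (setNbhd H C)) x₀ := moplex_eq_TC hX hx₀
  have hXTC : X = TC H x₀ := by
    apply Set.Subset.antisymm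
    · intro t ht
      have htC : t ∈ C := hXC ht
      have h1 : t ∈ TC (satur H (setNbhd H C)) x₀ := hXTC' ▸ ht
      have h2 := mem_TC.mp h1
      rw [fN t htC, fN x₀ hx₀C] at h2
      exact mem_TC.mpr h2
    · intro t ht
      have ht' := mem_TC.mp ht
      have htCS : t ∈ C ∪ setNbhd H C := by
        have h1 : t ∈ closedNbhd H x₀ := by
          rw [← ht']; exact self_mem_closedNbhd H t
        exact closedNbhd_subset hx₀C h1
      rcases htCS with htC | htS
      · rw [hXTC']
        refine mem_TC.mpr ?_
        rw [fN t htC, fN x₀ hx₀C]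
        exact ht'
      · exfalso
        obtain ⟨k, hk, hks⟩ := hKfull t htS
        have h1 : k ∈ closedNbhd H t := mem_closedNbhd.mpr (Or.inr hks)
        rw [ht'] at h1
        rcases closedNbhd_subset hx₀C h1 with h | h
        · exact hKC k hk h
        · exact hKS k hk h
  have hTT : setNbhd H X = setNbhd (satur H (setNbhd H C)) X := by
    ext w
    rw [mem_setNbhd, mem_setNbhd]
    constructor
    · rintro ⟨hw, x, hx, hadj⟩
      exact ⟨hw, x, hx, (f1' x (hXC hx) w).mpr hadj⟩
    · rintro ⟨hw, x, hx, hadj⟩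
      exact ⟨hw, x, hx, (f1' x (hXC hx) w).mp hadj⟩
  have hTsub : setNbhd H X ⊆ C ∪ setNbhd H C := by
    intro w hw
    obtain ⟨hwX, x, hx, hadj⟩ := mem_setNbhd.mp hw
    exact closedNbhd_subset (hXC hx) (mem_closedNbhd.mpr (Or.inr hadj.symm))
  have hle : ∀ a b, H.Adj a b → (satur H (setNbhd H C)).Adj a b := fun a b h => Or.inl h
  refine ⟨hX.1, ?_, ?_, ?_⟩
  · rw [hXTC]; exact TC_cliqueModule H x₀
  · intro Y hXY hY
    refine Set.Subset.antisymm ?_ hXY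
    intro y hy
    rw [hXTC]
    exact mem_TC.mpr (cliqueModule_closedNbhd_eq hY hy (hXY hx₀))
  · rcases hX.2.2.2 with hemp | hmin
    · left; rw [hTT]; exact hemp
    · right
      obtain ⟨u₁, u₂, hne, ⟨hadj', h1, h2, hnr'⟩, hmin'⟩ := hmin
      have hKT : ∀ T₂ : Set V, T₂ ⊆ setNbhd H X → ∀ k ∈ K, k ∉ T₂ := by
        intro T₂ hT₂ k hk hkT
        rcases hTsub (hT₂ hkT) with h | h
        · exact hKC k hk h
        · exact hKS k hk h
      refine ⟨u₁, u₂, hne, ⟨⟨?_, ?_, ?_, ?_⟩, ?_⟩⟩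
      · exact fun hadj => hadj' (hle _ _ hadj)
      · rw [hTT]; exact h1
      · rw [hTT]; exact h2
      · intro hr
        apply hnr'
        rw [← hTT]
        exact reach_up hle hr
      · intro T₂ hT₂ hsep₂
        have hT₂' : T₂ ⊂ setNbhd (satur H (setNbhd H C)) X := by
          rw [← hTT]; exact hT₂
        apply hmin' T₂ hT₂'
        have hKT₂ : ∀ k ∈ K, k ∉ T₂ := hKT T₂ hT₂.subset
        refine ⟨?_, hsep₂.2.1, hsep₂.2.2.1, ?_⟩
        · rintro (hadj | ⟨hne', hS1, hS2⟩)
          · exact hsep₂.1 hadj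
          · obtain ⟨k₁, hk₁, ha₁⟩ := hKfull u₁ hS1
            obtain ⟨k₂, hk₂, ha₂⟩ := hKfull u₂ hS2
            obtain ⟨r, hr⟩ := hKconn k₁ hk₁ k₂ hk₂
            apply hsep₂.2.2.2
            refine ⟨SimpleGraph.Walk.cons ha₁ (r.append (SimpleGraph.Walk.cons ha₂.symm SimpleGraph.Walk.nil)), ?_⟩
            intro x hx
            rw [SimpleGraph.Walk.support_cons] at hx
            rcases List.mem_cons.mp hx with rfl | hx
            · exact hsep₂.2.1
            · rw [SimpleGraph.Walk.support_append] at hx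
              rcases List.mem_append.mp hx with hx | hx
              · exact hKT₂ x (hr x hx)
              · rw [SimpleGraph.Walk.support_cons, List.tail_cons,
                  SimpleGraph.Walk.support_nil, List.mem_singleton] at hx
                subst hx
                exact hsep₂.2.2.1
        · rintro ⟨p', hp'⟩
          obtain ⟨q, hq⟩ := walk_down hKfull hKconn p'
          apply hsep₂.2.2.2
          refine ⟨q, fun x hx => ?_⟩
          rcases hq x hx with hx' | hx'
          · exact hp' x hx'
          · exact hKT₂ x hx'
/-! ### Existence of a moplex inside a region -/

lemma exists_moplex_aux [Fintype V] :
    ∀ n : ℕ, ∀ (H : SimpleGraph V) (C K : Set V),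
      (C ∪ setNbhd H C).ncard ≤ n →
      C.Nonempty →
      (∀ x ∈ C, ∀ y ∈ C, ∃ p : H.Walk x y, ∀ z ∈ p.support, z ∈ C) →
      (∀ k ∈ K, k ∉ C) →
      (∀ k ∈ K, k ∉ setNbhd H C) →
      (∀ s ∈ setNbhd H C, ∃ k ∈ K, H.Adj s k) →
      (∀ k ∈ K, ∀ k' ∈ K, ∃ p : H.Walk k k', ∀ z ∈ p.support, z ∈ K) →
      ∃ X, X ⊆ C ∧ IsMoplex H X := by
  intro n
  induction n with
  | zero =>
    intro H C K hn hCne _ _ _ _ _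
    exfalso
    obtain ⟨c₀, hc₀⟩ := hCne
    have h0 : C ∪ setNbhd H C = ∅ :=
      (Set.ncard_eq_zero (Set.toFinite _)).mp (Nat.le_zero.mp hn)
    have : c₀ ∈ C ∪ setNbhd H C := Or.inl hc₀
    rw [h0] at this
    exact this
  | succ n IH =>
    intro H C K hn hCne hCconn hKC hKS hKfull hKconn
    classical
    have hCS : ∀ u ∈ C, u ∉ setNbhd H C := fun u hu h => (mem_setNbhd.mp h).1 hu
    -- the recursive step, uniform in the choice of the "pivot" vertex v'
    have key : ∀ v' w₀, v' ∈ C ∪ setNbhd H C → w₀ ∈ C →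
        w₀ ∉ closedNbhd (satur H (setNbhd H C)) v' →
        setNbhd H C ⊆ closedNbhd (satur H (setNbhd H C)) v' →
        ∃ X, X ⊆ C ∧ IsMoplex H X := by
      intro v' w₀ hv'CS hw₀C hw₀ hSin
      have hw₀C' : w₀ ∈ RS (satur H (setNbhd H C)) (closedNbhd (satur H (setNbhd H C)) v') w₀ :=
        base_mem_RS hw₀
      have hstep : ∀ cc ∈ C, ∀ w, (satur H (setNbhd H C)).Adj cc w →
          w ∉ closedNbhd (satur H (setNbhd H C)) v' → w ∈ C := by
        intro cc hcc w hadj hwB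
        have hHadj : H.Adj cc w := (satur_adj_left (hCS cc hcc)).mp hadj
        rcases closedNbhd_subset hcc (mem_closedNbhd.mpr (Or.inr hHadj)) with h | h
        · exact h
        · exact absurd (hSin h) hwB
      have hC'C : RS (satur H (setNbhd H C)) (closedNbhd (satur H (setNbhd H C)) v') w₀ ⊆ C := by
        intro w hw
        obtain ⟨p, hp⟩ := mem_RS.mp hw
        exact walk_stay_general hstep p hw₀C hp
      have hS'sub : setNbhd (satur H (setNbhd H C))
            (RS (satur H (setNbhd H C)) (closedNbhd (satur H (setNbhd H C)) v') w₀)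
          ⊆ closedNbhd (satur H (setNbhd H C)) v' := by
        intro s' hs'
        obtain ⟨hs'C', c', hc', hadj'⟩ := mem_setNbhd.mp hs'
        by_contra hs'B
        exact hs'C' (RS_extend hc' hadj'.symm hs'B)
      have hv'notC' : v' ∉ RS (satur H (setNbhd H C)) (closedNbhd (satur H (setNbhd H C)) v') w₀ :=
        fun h => (RS_notMem_B h) (self_mem_closedNbhd _ v')
      have hv'notS' : v' ∉ setNbhd (satur H (setNbhd H C))
          (RS (satur H (setNbhd H C)) (closedNbhd (satur H (setNbhd H C)) v') w₀) := by
        intro h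
        obtain ⟨hv'C', c', hc', hadj'⟩ := mem_setNbhd.mp h
        exact (RS_notMem_B hc') (mem_closedNbhd.mpr (Or.inr hadj'))
      have hS'adj : ∀ s' ∈ setNbhd (satur H (setNbhd H C))
          (RS (satur H (setNbhd H C)) (closedNbhd (satur H (setNbhd H C)) v') w₀),
          (satur H (setNbhd H C)).Adj v' s' := by
        intro s' hs'
        rcases mem_closedNbhd.mp (hS'sub hs') with rfl | h
        · exact absurd hs' hv'notS'
        · exact h
      have hsub2 : RS (satur H (setNbhd H C)) (closedNbhd (satur H (setNbhd H C)) v') w₀ ∪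
          setNbhd (satur H (setNbhd H C))
            (RS (satur H (setNbhd H C)) (closedNbhd (satur H (setNbhd H C)) v') w₀)
          ⊆ C ∪ setNbhd H C := by
        rintro z (hz | hz)
        · exact Or.inl (hC'C hz)
        · obtain ⟨hzC', c', hc', hadj'⟩ := mem_setNbhd.mp hz
          have hc'C : c' ∈ C := hC'C hc'
          have hHadj : H.Adj z c' := (satur_adj_right (hCS c' hc'C)).mp hadj'
          exact closedNbhd_subset hc'C (mem_closedNbhd.mpr (Or.inr hHadj.symm))
      have hmeas : (RS (satur H (setNbhd H C)) (closedNbhd (satur H (setNbhd H C)) v') w₀ ∪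
          setNbhd (satur H (setNbhd H C))
            (RS (satur H (setNbhd H C)) (closedNbhd (satur H (setNbhd H C)) v') w₀)).ncard ≤ n := by
        have hv'n : v' ∉ RS (satur H (setNbhd H C)) (closedNbhd (satur H (setNbhd H C)) v') w₀ ∪
            setNbhd (satur H (setNbhd H C))
              (RS (satur H (setNbhd H C)) (closedNbhd (satur H (setNbhd H C)) v') w₀) := by
          rintro (h | h)
          · exact hv'notC' h
          · exact hv'notS' h
        have hss : RS (satur H (setNbhd H C)) (closedNbhd (satur H (setNbhd H C)) v') w₀ ∪
            setNbhd (satur H (setNbhd H C))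
              (RS (satur H (setNbhd H C)) (closedNbhd (satur H (setNbhd H C)) v') w₀)
            ⊂ C ∪ setNbhd H C := by
          rw [Set.ssubset_iff_subset_ne]
          exact ⟨hsub2, fun heq => hv'n (by rw [heq]; exact hv'CS)⟩
        have := Set.ncard_lt_ncard hss (Set.toFinite _)
        omega
      obtain ⟨X, hXC', hX⟩ := IH (satur H (setNbhd H C))
          (RS (satur H (setNbhd H C)) (closedNbhd (satur H (setNbhd H C)) v') w₀)
          ({v'} : Set V) hmeas ⟨w₀, hw₀C'⟩ RS_conn
          (by intro k hk; rw [Set.mem_singleton_iff] at hk; subst hk; exact hv'notC')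
          (by intro k hk; rw [Set.mem_singleton_iff] at hk; subst hk; exact hv'notS')
          (fun s' hs' => ⟨v', Set.mem_singleton v', (hS'adj s' hs').symm⟩)
          (by
            intro k hk k' hk'
            rw [Set.mem_singleton_iff] at hk hk'
            subst hk; subst hk'
            exact ⟨SimpleGraph.Walk.nil, by
              intro z hz
              rw [SimpleGraph.Walk.support_nil, List.mem_singleton] at hz
              subst hz; exact Set.mem_singleton _⟩)
      have hXC : X ⊆ C := hXC'.trans hC'C
      exact ⟨X, hXC, moplex_transfer hKC hKS hKfull hKconn hXC hX⟩
    by_cases hadjall : ∀ s ∈ setNbhd H C, ∀ c ∈ C, H.Adj s c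
    · by_cases hclique : H.IsClique C
      · -- X = C is itself a moplex
        obtain ⟨c₀, hc₀⟩ := hCne
        have hNC : ∀ u ∈ C, closedNbhd H u = C ∪ setNbhd H C := by
          intro u hu
          apply Set.Subset.antisymm (closedNbhd_subset hu)
          rintro z (hz | hz)
          · rcases eq_or_ne z u with heq | hne
            · rw [heq]; exact self_mem_closedNbhd H u
            · exact mem_closedNbhd.mpr (Or.inr (hclique hu hz hne.symm))
          · exact mem_closedNbhd.mpr (Or.inr (hadjall z hz u hu).symm)
        refine ⟨C, Set.Subset.refl C, ⟨c₀, hc₀⟩, ⟨hclique, ?_⟩, ?_, ?_⟩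
        · -- module
          intro v hv
          by_cases hvS : v ∈ setNbhd H C
          · exact Or.inl fun x hx => hadjall v hvS x hx
          · exact Or.inr fun x hx hadj => hvS (mem_setNbhd_of_adj hv hx hadj)
        · -- maximality
          intro Y hCY hY
          refine Set.Subset.antisymm ?_ hCY
          intro y hy
          have htw := cliqueModule_closedNbhd_eq hY hy (hCY hc₀)
          have hyCS : y ∈ C ∪ setNbhd H C := by
            have h1 : y ∈ closedNbhd H c₀ := by
              rw [← htw]; exact self_mem_closedNbhd H y
            rw [hNC c₀ hc₀] at h1
            exact h1
          rcases hyCS with h | h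
          · exact h
          · exfalso
            obtain ⟨k, hk, hks⟩ := hKfull y h
            have h1 : k ∈ closedNbhd H y := mem_closedNbhd.mpr (Or.inr hks)
            rw [htw, hNC c₀ hc₀] at h1
            rcases h1 with h' | h'
            · exact hKC k hk h'
            · exact hKS k hk h'
        · -- neighbourhood condition
          by_cases hSemp : setNbhd H C = ∅
          · exact Or.inl hSemp
          · right
            obtain ⟨s₀, hs₀⟩ := Set.nonempty_iff_ne_empty.mpr hSemp
            obtain ⟨k₀, hk₀, hk₀s⟩ := hKfull s₀ hs₀
            have hck : c₀ ≠ k₀ := fun h => hKC k₀ hk₀ (h ▸ hc₀)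
            refine ⟨c₀, k₀, hck, ⟨⟨?_, hCS c₀ hc₀, hKS k₀ hk₀, ?_⟩, ?_⟩⟩
            · intro hadj
              by_cases hkC : k₀ ∈ C
              · exact hKC k₀ hk₀ hkC
              · exact hKS k₀ hk₀ (mem_setNbhd_of_adj hkC hc₀ hadj.symm)
            · rintro ⟨p, hp⟩
              exact hKC k₀ hk₀ (walk_stay p hc₀ hp)
            · intro T hT hsepT
              obtain ⟨s₁, hs₁S, hs₁T⟩ := Set.exists_of_ssubset hT
              obtain ⟨k₁, hk₁, hk₁s⟩ := hKfull s₁ hs₁S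
              obtain ⟨r, hr⟩ := hKconn k₁ hk₁ k₀ hk₀
              apply hsepT.2.2.2
              refine ⟨SimpleGraph.Walk.cons (hadjall s₁ hs₁S c₀ hc₀).symm
                (SimpleGraph.Walk.cons hk₁s r), ?_⟩
              intro x hx
              have hTS : T ⊆ setNbhd H C := hT.subset
              rw [SimpleGraph.Walk.support_cons] at hx
              rcases List.mem_cons.mp hx with heq | hx
              · intro hcT
                rw [heq] at hcT
                exact hCS c₀ hc₀ (hTS hcT)
              · rw [SimpleGraph.Walk.support_cons] at hx
                rcases List.mem_cons.mp hx with rfl | hx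
                · exact hs₁T
                · exact fun hxT => hKS x (hr x hx) (hTS hxT)
      · -- C is not a clique; all of S is adjacent to all of C
        rw [SimpleGraph.isClique_iff, Set.Pairwise] at hclique
        push_neg at hclique
        obtain ⟨x₂, hx₂, y₂, hy₂, hxy, hnadj⟩ := hclique
        refine key x₂ y₂ (Or.inl hx₂) hy₂ ?_ ?_
        · intro hmem
          rcases mem_closedNbhd.mp hmem with h | h
          · exact hxy h.symm
          · exact hnadj ((satur_adj_left (hCS x₂ hx₂)).mp h)
        · intro s hs
          exact mem_closedNbhd.mpr (Or.inr (satur_adj.mpr (Or.inl (hadjall s hs x₂ hx₂).symm)))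
    · -- some vertex of S is non-adjacent to some vertex of C
      push_neg at hadjall
      obtain ⟨s₂, hs₂S, c₂, hc₂C, hnadj⟩ := hadjall
      refine key s₂ c₂ (Or.inr hs₂S) hc₂C ?_ ?_
      · intro hmem
        rcases mem_closedNbhd.mp hmem with h | h
        · exact hCS c₂ hc₂C (h ▸ hs₂S)
        · exact hnadj ((satur_adj_right (hCS c₂ hc₂C)).mp h)
      · intro s hs
        rcases eq_or_ne s s₂ with rfl | hne
        · exact self_mem_closedNbhd _ s
        · exact mem_closedNbhd.mpr (Or.inr (satur_adj.mpr (Or.inr ⟨hne.symm, hs₂S, hs⟩)))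
/-! ### The side regions of an asteroidal triple -/

/-- The set of vertices reachable from `w₀` avoiding the closed neighbourhood of `u`. -/
def Creg (G : SimpleGraph V) (u w₀ : V) : Set V := RS G (closedNbhd G u) w₀

/-- The private side region of `u`. -/
def Kreg (G : SimpleGraph V) (u w₀ : V) : Set V := RS G (setNbhd G (Creg G u w₀)) u

lemma Sreg_subset_adj {G : SimpleGraph V} {u w₀ : V} :
    ∀ s ∈ setNbhd G (Creg G u w₀), G.Adj u s := by
  intro s hs
  obtain ⟨hsC, c', hc', hadj⟩ := mem_setNbhd.mp hs
  by_cases hB : s ∈ closedNbhd G u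
  · rcases mem_closedNbhd.mp hB with rfl | h
    · exact absurd (mem_closedNbhd.mpr (Or.inr hadj)) (RS_notMem_B hc')
    · exact h
  · exact absurd (RS_extend hc' hadj.symm hB) hsC

lemma u_mem_Kreg (G : SimpleGraph V) (u w₀ : V) : u ∈ Kreg G u w₀ :=
  base_mem_RS fun h => G.irrefl (Sreg_subset_adj u h)

lemma Kreg_disj_Creg {G : SimpleGraph V} {u w₀ : V} :
    ∀ z ∈ Kreg G u w₀, z ∉ Creg G u w₀ := by
  intro z hz hzC
  obtain ⟨p, hp⟩ := mem_RS.mp hz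
  have h1 : u ∈ Creg G u w₀ := walk_stay p.reverse hzC (by
    intro x hx
    rw [SimpleGraph.Walk.support_reverse] at hx
    exact hp x (List.mem_reverse.mp hx))
  exact (RS_notMem_B h1) (self_mem_closedNbhd G u)

lemma setNbhd_Kreg_sub {G : SimpleGraph V} {u w₀ : V} :
    setNbhd G (Kreg G u w₀) ⊆ setNbhd G (Creg G u w₀) := by
  intro t ht
  obtain ⟨htK, k, hk, hadj⟩ := mem_setNbhd.mp ht
  by_contra hB
  exact htK (RS_extend hk hadj.symm hB)

lemma exists_side_moplex [Fintype V] (G : SimpleGraph V) (u w₀ : V) :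
    ∃ M, M ⊆ Kreg G u w₀ ∧ IsMoplex G M := by
  refine exists_moplex_aux (Kreg G u w₀ ∪ setNbhd G (Kreg G u w₀)).ncard G
    (Kreg G u w₀) (Creg G u w₀) (le_refl _) ⟨u, u_mem_Kreg G u w₀⟩ RS_conn ?_ ?_ ?_ RS_conn
  · intro k hk hkK
    exact Kreg_disj_Creg k hkK hk
  · intro k hk h
    exact (mem_setNbhd.mp (setNbhd_Kreg_sub h)).1 hk
  · intro s hs
    obtain ⟨hsC, c', hc', hadj⟩ := mem_setNbhd.mp (setNbhd_Kreg_sub hs)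
    exact ⟨c', hc', hadj⟩

lemma Kreg_cross_disjoint {G : SimpleGraph V} {a b a₀ b₀ : V}
    (hba : b ∈ Creg G a a₀) (hab : a ∈ Creg G b b₀) :
    ∀ z ∈ Kreg G a a₀, z ∉ Kreg G b b₀ := by
  classical
  intro z hzA hzB
  obtain ⟨p, hp⟩ := exists_walk_in_RS hzA
  by_cases hScross : ∀ x ∈ p.support, x ∉ setNbhd G (Creg G b b₀)
  · exact Kreg_disj_Creg z hzB (walk_stay p hab hScross)
  · push_neg at hScross
    obtain ⟨s, hsP, hsS⟩ := hScross
    have hsK : s ∈ Kreg G a a₀ := hp s hsP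
    have hadj : G.Adj b s := Sreg_subset_adj s hsS
    by_cases hbK : b ∈ Kreg G a a₀
    · exact Kreg_disj_Creg b hbK hba
    · have h1 : b ∈ setNbhd G (Kreg G a a₀) := mem_setNbhd_of_adj hbK hsK hadj
      exact (mem_setNbhd.mp (setNbhd_Kreg_sub h1)).1 hba

end TwoMoplexProof

/-- Every graph with at most two moplexes is AT-free. -/
theorem twoMoplex_ATFree {V : Type*} [Fintype V] (G : SimpleGraph V)
    (h : {X : Set V | IsMoplex G X}.ncard ≤ 2) : ATFree G := by
  classical
  rintro ⟨A, hAst, hA3⟩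
  obtain ⟨a, b, c, hab, hac, hbc, rfl⟩ := Set.ncard_eq_three.mp hA3
  have ha : a ∈ ({a, b, c} : Set V) := by simp
  have hb : b ∈ ({a, b, c} : Set V) := by simp
  have hc : c ∈ ({a, b, c} : Set V) := by simp
  have hbc_a : ReachOutside G (closedNbhd G a) b c := hAst a ha b hb c hc hab.symm hac.symm
  have hac_b : ReachOutside G (closedNbhd G b) a c := hAst b hb a ha c hc hab hbc.symm
  have hab_c : ReachOutside G (closedNbhd G c) a b := hAst c hc a ha b hb hac hbc
  have hbA : b ∈ Creg G a b := base_mem_RS (reach_notMem_left hbc_a)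
  have hcA : c ∈ Creg G a b := mem_RS.mpr hbc_a
  have haB : a ∈ Creg G b a := base_mem_RS (reach_notMem_left hac_b)
  have hcB : c ∈ Creg G b a := mem_RS.mpr hac_b
  have haC : a ∈ Creg G c a := base_mem_RS (reach_notMem_left hab_c)
  have hbC : b ∈ Creg G c a := mem_RS.mpr hab_c
  obtain ⟨Ma, hMaK, hMa⟩ := exists_side_moplex G a b
  obtain ⟨Mb, hMbK, hMb⟩ := exists_side_moplex G b a
  obtain ⟨Mc, hMcK, hMc⟩ := exists_side_moplex G c a
  have dAB : ∀ z ∈ Kreg G a b, z ∉ Kreg G b a := Kreg_cross_disjoint hbA haB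
  have dAC : ∀ z ∈ Kreg G a b, z ∉ Kreg G c a := Kreg_cross_disjoint hcA haC
  have dBC : ∀ z ∈ Kreg G b a, z ∉ Kreg G c a := Kreg_cross_disjoint hcB hbC
  obtain ⟨ma, hma⟩ := hMa.1
  obtain ⟨mb, hmb⟩ := hMb.1
  have h1 : Ma ≠ Mb := fun he => dAB ma (hMaK hma) (hMbK (he ▸ hma))
  have h2 : Ma ≠ Mc := fun he => dAC ma (hMaK hma) (hMcK (he ▸ hma))
  have h3 : Mb ≠ Mc := fun he => dBC mb (hMbK hmb) (hMcK (he ▸ hmb))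
  have hsub : ({Ma, Mb, Mc} : Set (Set V)) ⊆ {X : Set V | IsMoplex G X} := by
    intro X hX
    rcases hX with rfl | hX
    · exact hMa
    · rcases hX with rfl | hX
      · exact hMb
      · rw [Set.mem_singleton_iff] at hX
        subst hX
        exact hMc
  have hcard : ({Ma, Mb, Mc} : Set (Set V)).ncard = 3 :=
    Set.ncard_eq_three.mpr ⟨Ma, Mb, Mc, h1, h2, h3, rfl⟩
  have hle := Set.ncard_le_ncard hsub (Set.toFinite _)
  rw [hcard] at hle
  omega
end MoplexPaper
end

section
/- Let G be a non-complete graph with exactly two moplexes U and W. Then for every minimal separator S of G, the graph G−S has exactly two connected components, one containing U and the other containing W. -/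
open SimpleGraph

namespace MoplexPaper

variable {V : Type*}

section AuxLemmas

variable {G : SimpleGraph V} {S T : Set V} {u v x y : V}

lemma reach_refl (hx : x ∉ S) : ReachOutside G S x x := by
  refine ⟨Walk.nil, fun z hz => ?_⟩
  simp only [Walk.support_nil, List.mem_singleton] at hz
  subst hz; exact hx

lemma reach_symm (h : ReachOutside G S x y) : ReachOutside G S y x := by
  obtain ⟨p, hp⟩ := h
  exact ⟨p.reverse, fun z hz => hp z (by rwa [Walk.support_reverse, List.mem_reverse] at hz)⟩

lemma reach_trans_s6 {z : V} (h1 : ReachOutside G S x y) (h2 : ReachOutside G S y z) :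
    ReachOutside G S x z := by
  obtain ⟨p, hp⟩ := h1; obtain ⟨q, hq⟩ := h2
  refine ⟨p.append q, fun a ha => ?_⟩
  rcases (Walk.mem_support_append_iff p q).1 ha with h | h
  · exact hp a h
  · exact hq a h

lemma reach_left_not_mem (h : ReachOutside G S x y) : x ∉ S := by
  obtain ⟨p, hp⟩ := h; exact hp x p.start_mem_support

lemma reach_right_not_mem (h : ReachOutside G S x y) : y ∉ S := by
  obtain ⟨p, hp⟩ := h; exact hp y p.end_mem_support

lemma reach_anti (hTS : T ⊆ S) (h : ReachOutside G S x y) : ReachOutside G T x y := by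
  obtain ⟨p, hp⟩ := h; exact ⟨p, fun z hz hzT => hp z hz (hTS hzT)⟩

lemma adj_reach (h : G.Adj x y) (hx : x ∉ S) (hy : y ∉ S) : ReachOutside G S x y := by
  refine ⟨Walk.cons h Walk.nil, fun z hz => ?_⟩
  simp only [Walk.support_cons, Walk.support_nil, List.mem_cons, List.mem_singleton,
    List.not_mem_nil, or_false] at hz
  rcases hz with rfl | rfl
  exacts [hx, hy]

lemma reach_of_mem_support :
    ∀ {x y : V} (p : G.Walk x y), (∀ w ∈ p.support, w ∉ S) →
      ∀ w ∈ p.support, ReachOutside G S x w := by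
  intro x y p
  induction p with
  | nil =>
    intro hp w hw
    simp only [Walk.support_nil, List.mem_singleton] at hw
    subst hw; exact reach_refl (hp _ (by simp))
  | @cons a b c h q ih =>
    intro hp w hw
    rw [Walk.support_cons, List.mem_cons] at hw
    rcases hw with rfl | hw
    · exact reach_refl (hp w (by simp))
    · have haS : a ∉ S := hp a (by simp)
      have hbS : b ∉ S := hp b (by simp)
      exact reach_trans_s6 (adj_reach h haS hbS)
        (ih (fun w hw => hp w (by simp [hw])) w hw)

lemma support_subset_of_closed {C : Set V} :
    ∀ {x y : V} (p : G.Walk x y), x ∈ C →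
      (∀ w ∈ p.support, w ∉ setNbhd G C) → ∀ w ∈ p.support, w ∈ C := by
  intro x y p
  induction p with
  | nil =>
    intro hx _ w hw
    simp only [Walk.support_nil, List.mem_singleton] at hw
    subst hw; exact hx
  | @cons a b c h q ih =>
    intro ha hp w hw
    have hb : b ∈ C := by
      by_contra hb
      exact hp b (by simp) ⟨hb, a, ha, h.symm⟩
    rw [Walk.support_cons, List.mem_cons] at hw
    rcases hw with rfl | hw
    · exact ha
    · exact ih hb (fun w hw => hp w (by simp [hw])) w hw

lemma isSeparator_symm (h : IsSeparator G u v S) : IsSeparator G v u S :=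
  ⟨fun a => h.1 a.symm, h.2.2.1, h.2.1, fun r => h.2.2.2 (reach_symm r)⟩

lemma isMinSeparator_symm (h : IsMinSeparator G u v S) : IsMinSeparator G v u S :=
  ⟨isSeparator_symm h.1, fun T hT hsep => h.2 T hT (isSeparator_symm hsep)⟩

/-- Every vertex of a minimal `u,v`-separator has a neighbour in the component of `u`. -/
lemma exists_adj_reach_of_mem_minsep {s : V} (h : IsMinSeparator G u v S) (hs : s ∈ S) :
    ∃ c, ReachOutside G S u c ∧ G.Adj c s := by
  classical
  obtain ⟨⟨hadj, hu, hv, hnr⟩, hminim⟩ := h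
  have hlt : S \ {s} ⊂ S := (Set.sdiff_singleton_ssubset).2 hs
  have hns := hminim _ hlt
  have hre : ReachOutside G (S \ {s}) u v := by
    by_contra hr
    exact hns ⟨hadj, fun h' => hu h'.1, fun h' => hv h'.1, hr⟩
  obtain ⟨p, hp⟩ := hre
  have hsp : s ∈ p.support := by
    by_contra hsp
    refine hnr ⟨p, fun w hw hwS => ?_⟩
    rcases eq_or_ne w s with rfl | hws
    · exact hsp hw
    · exact hp w hw ⟨hwS, hws⟩
  set q := p.takeUntil s hsp with hq
  have hqsub : q.support ⊆ p.support := Walk.support_takeUntil_subset p hsp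
  have hqcount : q.support.count s = 1 := p.count_support_takeUntil_eq_one hsp
  have hsu : s ≠ u := fun e => hu (e ▸ hs)
  obtain ⟨c, hsc, r, hqr⟩ := (q.reverse).exists_eq_cons_of_ne hsu
  have hsupp : q.reverse.support = s :: r.support := by rw [hqr, Walk.support_cons]
  have hsr : s ∉ r.support := by
    have h1 : q.reverse.support.count s = 1 := by
      rw [Walk.support_reverse, List.count_reverse]; exact hqcount
    rw [hsupp, List.count_cons_self] at h1
    exact List.count_eq_zero.1 (by omega)
  have hrsub : ∀ w ∈ r.support, w ∈ p.support := by
    intro w hw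
    apply hqsub
    have : w ∈ q.reverse.support := by rw [hsupp]; exact List.mem_cons_of_mem _ hw
    rwa [Walk.support_reverse, List.mem_reverse] at this
  refine ⟨c, ⟨r.reverse, fun w hw hwS => ?_⟩, hsc.symm⟩
  rw [Walk.support_reverse, List.mem_reverse] at hw
  rcases eq_or_ne w s with rfl | hws
  · exact hsr hw
  · exact hp w (hrsub w hw) ⟨hwS, hws⟩

lemma exists_minsep_subset [Fintype V] :
    ∀ (n : ℕ) (S : Set V), S.ncard ≤ n → IsSeparator G u v S →
      ∃ T ⊆ S, IsMinSeparator G u v T := by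
  intro n
  induction n with
  | zero =>
    intro S hle hsep
    have hS0 : S = ∅ := by
      have := Nat.le_zero.1 hle
      rwa [Set.ncard_eq_zero S.toFinite] at this
    refine ⟨S, subset_rfl, hsep, fun T hT _ => ?_⟩
    rw [hS0] at hT
    obtain ⟨a, ha, -⟩ := Set.exists_of_ssubset hT
    exact absurd ha (Set.notMem_empty a)
  | succ n ih =>
    intro S hle hsep
    by_cases hmin : ∀ T ⊂ S, ¬ IsSeparator G u v T
    · exact ⟨S, subset_rfl, hsep, hmin⟩
    · push_neg at hmin
      obtain ⟨T, hTS, hTsep⟩ := hmin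
      have hTle : T.ncard ≤ n := by
        have := Set.ncard_lt_ncard hTS S.toFinite
        omega
      obtain ⟨T', hT', hmin'⟩ := ih T hTle hTsep
      exact ⟨T', hT'.trans hTS.subset, hmin'⟩

/-- The invariant carried through the induction: `C` is nonempty and (unless its
neighbourhood is empty) its neighbourhood is a minimal separator, with a "far side"
`D` that is disjoint from `C` and its neighbourhood, connected within itself, and
adjacent to every vertex of the neighbourhood. -/
def Inv (G : SimpleGraph V) (C : Set V) : Prop :=
  C.Nonempty ∧
  (setNbhd G C = ∅ ∨
    (IsMinimalSeparator G (setNbhd G C) ∧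
      ∃ D : Set V, (∀ d ∈ D, d ∉ C ∧ d ∉ setNbhd G C) ∧
        (∀ s ∈ setNbhd G C, ∃ d ∈ D, G.Adj s d) ∧
        (∀ d1 ∈ D, ∀ d2 ∈ D, ∃ p : G.Walk d1 d2, ∀ z ∈ p.support, z ∈ D)))

/-- A reachability class of a minimal separator satisfies the invariant. -/
lemma prep (huv : u ≠ v) (hmin : IsMinSeparator G u v S) (hx : x ∉ S) :
    Inv G {y | ReachOutside G S x y} := by
  set C : Set V := {y | ReachOutside G S x y} with hC
  have hxC : x ∈ C := reach_refl hx
  have hCS : ∀ y ∈ C, y ∉ S := fun y hy => reach_right_not_mem hy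
  have hS'S : setNbhd G C ⊆ S := by
    rintro z ⟨hzC, c, hcC, hzc⟩
    by_contra hzS
    exact hzC (reach_trans_s6 hcC (adj_reach hzc.symm (hCS c hcC) hzS))
  have hnruv : ¬ ReachOutside G S u v := hmin.1.2.2.2
  -- pick w ∈ {u,v} with w ∉ C, with full-neighbourhood property
  obtain ⟨w, hwC, hwS, hwfull⟩ :
      ∃ w, w ∉ C ∧ w ∉ S ∧ ∀ s ∈ S, ∃ c, ReachOutside G S w c ∧ G.Adj c s := by
    by_cases huC : u ∈ C
    · refine ⟨v, fun hvC => hnruv (reach_trans_s6 (reach_symm huC) hvC), hmin.1.2.2.1,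
        fun s hs => exists_adj_reach_of_mem_minsep (isMinSeparator_symm hmin) hs⟩
    · exact ⟨u, huC, hmin.1.2.1, fun s hs => exists_adj_reach_of_mem_minsep hmin hs⟩
  refine ⟨⟨x, hxC⟩, ?_⟩
  by_cases hS' : setNbhd G C = ∅
  · exact Or.inl hS'
  right
  have hxw : x ≠ w := fun e => hwC (e ▸ hxC)
  have hsepxw : IsSeparator G x w (setNbhd G C) := by
    refine ⟨?_, fun hmem => hmem.1 hxC, fun hmem => hwS (hS'S hmem), ?_⟩
    · intro hadj
      exact hwC (reach_trans_s6 hxC (adj_reach hadj hx hwS))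
    · rintro ⟨p, hp⟩
      exact hwC (support_subset_of_closed p hxC hp w p.end_mem_support)
  have hminxw : IsMinSeparator G x w (setNbhd G C) := by
    refine ⟨hsepxw, fun T hTss hTsep => ?_⟩
    obtain ⟨t, htS', htT⟩ := Set.exists_of_ssubset hTss
    have htS : t ∈ S := hS'S htS'
    obtain ⟨htC, c, hcC, htc⟩ := htS'
    obtain ⟨d, hwd, hdt⟩ := hwfull t htS
    have hTsubS : T ⊆ S := hTss.subset.trans hS'S
    have hcT : c ∉ T := fun hm => hCS c hcC (hTsubS hm)
    have hdT : d ∉ T := fun hm => reach_right_not_mem hwd (hTsubS hm)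
    apply hTsep.2.2.2
    exact reach_trans_s6 (reach_trans_s6 (reach_trans_s6 (reach_anti hTsubS hcC)
      (adj_reach htc.symm hcT htT)) (adj_reach hdt.symm htT hdT))
      (reach_anti hTsubS (reach_symm hwd))
  refine ⟨⟨x, w, hxw, hminxw⟩, {y | ReachOutside G S w y}, ?_, ?_, ?_⟩
  · intro d hd
    constructor
    · intro hdC
      exact hwC (reach_trans_s6 hdC (reach_symm hd))
    · intro hdN
      exact reach_right_not_mem hd (hS'S hdN)
  · intro s hsN
    obtain ⟨c, hwc, hcs⟩ := hwfull s (hS'S hsN)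
    exact ⟨c, hwc, hcs.symm⟩
  · intro d1 hd1 d2 hd2
    obtain ⟨p, hp⟩ := reach_trans_s6 (reach_symm hd1) hd2
    exact ⟨p, fun z hz => reach_trans_s6 hd1 (reach_of_mem_support p hp z hz)⟩

/-- Key lemma: any set satisfying the invariant contains a moplex. -/
lemma key [Fintype V] :
    ∀ (n : ℕ) (C : Set V), C.ncard ≤ n → Inv G C → ∃ X, IsMoplex G X ∧ X ⊆ C := by
  intro n
  induction n with
  | zero =>
    intro C hle hInv
    obtain ⟨⟨c, hc⟩, -⟩ := hInv
    have h0 : C.ncard = 0 := Nat.le_zero.1 hle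
    rw [Set.ncard_eq_zero C.toFinite] at h0
    exact absurd (h0 ▸ hc) (Set.notMem_empty c)
  | succ n ih =>
    intro C hle hInv
    obtain ⟨hCne, hAlt⟩ := hInv
    by_cases hcm : IsCliqueModule G C
    · -- C itself is a moplex
      refine ⟨C, ⟨hCne, hcm, ?_, ?_⟩, subset_rfl⟩
      · intro Y hCY hYcm
        by_contra hne
        have hYnC : ¬ Y ⊆ C := fun h' => hne (subset_antisymm h' hCY)
        obtain ⟨y, hyY, hyC⟩ := Set.not_subset.1 hYnC
        obtain ⟨c, hcC⟩ := hCne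
        have hyc : G.Adj y c := hYcm.1 hyY (hCY hcC) (fun e => hyC (e ▸ hcC))
        have hyN : y ∈ setNbhd G C := ⟨hyC, c, hcC, hyc⟩
        rcases hAlt with hempty | ⟨_, D, hD1, hD2, hD3⟩
        · rw [hempty] at hyN; exact hyN
        · obtain ⟨d, hdD, hyd⟩ := hD2 y hyN
          have hdC : d ∉ C := (hD1 d hdD).1
          have hdN : d ∉ setNbhd G C := (hD1 d hdD).2
          have hdY : d ∉ Y := fun hdY =>
            hdN ⟨hdC, c, hcC, hYcm.1 hdY (hCY hcC) (fun e => hdC (e ▸ hcC))⟩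
          rcases hYcm.2 d hdY with hall | hnone
          · exact hdN ⟨hdC, c, hcC, hall c (hCY hcC)⟩
          · exact hnone y hyY hyd.symm
      · rcases hAlt with he | ⟨hm, -⟩
        exacts [Or.inl he, Or.inr hm]
    · -- C is not a clique module: find a non-adjacent pair and recurse
      obtain ⟨p, q, hpC, hpq, hnadj, hqinfo⟩ :
          ∃ p q, p ∈ C ∧ p ≠ q ∧ ¬ G.Adj p q ∧
            (q ∈ C ∨ (q ∈ setNbhd G C ∧ ∃ c1 ∈ C, G.Adj q c1 ∧ G.IsClique C)) := by
        by_cases hclique : G.IsClique C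
        · have hmod : ¬ IsModule G C := fun hm => hcm ⟨hclique, hm⟩
          rw [IsModule] at hmod
          push_neg at hmod
          obtain ⟨s, hsC, ⟨c2, hc2C, hc2⟩, c1, hc1C, hc1⟩ := hmod
          refine ⟨c2, s, hc2C, fun e => hsC (e ▸ hc2C), fun ha => hc2 ha.symm,
            Or.inr ⟨⟨hsC, c1, hc1C, hc1⟩, c1, hc1C, hc1, hclique⟩⟩
        · rw [SimpleGraph.isClique_iff, Set.Pairwise] at hclique
          push_neg at hclique
          obtain ⟨p, hpC, q, hqC, hpq, hnadj⟩ := hclique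
          exact ⟨p, q, hpC, hpq, hnadj, Or.inl hqC⟩
      have hqC' : q ∉ setNbhd G C ∨ True := Or.inr trivial
      -- the separator X0
      set X0 : Set V := (C ∪ setNbhd G C) \ {p, q} with hX0
      have hX0sep : IsSeparator G p q X0 := by
        refine ⟨hnadj, fun hm => hm.2 (by simp), fun hm => hm.2 (by simp), ?_⟩
        rintro ⟨wk, hwk⟩
        obtain ⟨b, hpb, r, rfl⟩ := wk.exists_eq_cons_of_ne hpq
        have hbC : b ∈ C ∪ setNbhd G C := by
          by_cases hb : b ∈ C
          · exact Or.inl hb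
          · exact Or.inr ⟨hb, p, hpC, hpb.symm⟩
        have hbp : b ≠ p := hpb.ne'
        have hbq : b ≠ q := fun e => hnadj (e ▸ hpb)
        exact hwk b (by simp) ⟨hbC, by simp [hbp, hbq]⟩
      obtain ⟨T, hTX0, hTmin⟩ := exists_minsep_subset X0.ncard X0 le_rfl hX0sep
      have hTCU : T ⊆ C ∪ setNbhd G C := hTX0.trans Set.diff_subset
      have hpT : p ∉ T := fun hm => (hTX0 hm).2 (by simp)
      have hqT : q ∉ T := fun hm => (hTX0 hm).2 (by simp)
      -- the "good side" dichotomy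
      have hgood : (∀ s ∈ setNbhd G C, s ∉ T → ¬ ReachOutside G T p s) ∨
          (∀ s ∈ setNbhd G C, s ∉ T → ¬ ReachOutside G T q s) := by
        by_contra hcon
        push_neg at hcon
        obtain ⟨⟨s1, hs1N, hs1T, hps1⟩, s2, hs2N, hs2T, hqs2⟩ := hcon
        rcases hAlt with hempty | ⟨-, D, hD1, hD2, hD3⟩
        · rw [hempty] at hs1N; exact hs1N
        · obtain ⟨d1, hd1D, hs1d1⟩ := hD2 s1 hs1N
          obtain ⟨d2, hd2D, hs2d2⟩ := hD2 s2 hs2N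
          have hDT : ∀ d ∈ D, d ∉ T := by
            intro d hd hdT
            rcases hTCU hdT with h' | h'
            exacts [(hD1 d hd).1 h', (hD1 d hd).2 h']
          obtain ⟨pw, hpw⟩ := hD3 d1 hd1D d2 hd2D
          apply hTmin.1.2.2.2
          refine reach_trans_s6 hps1 (reach_trans_s6 (adj_reach hs1d1 hs1T (hDT d1 hd1D))
            (reach_trans_s6 ⟨pw, fun z hz => hDT z (hpw z hz)⟩
              (reach_symm (reach_trans_s6 hqs2 (adj_reach hs2d2 hs2T (hDT d2 hd2D))))))
      -- the recursion step, for a "good" endpoint g with an excluded vertex c of C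
      have hstep : ∀ g : V, g ∈ C → g ∉ T →
          (∀ s ∈ setNbhd G C, s ∉ T → ¬ ReachOutside G T g s) →
          ∀ c ∈ C, (c ∈ T ∨ ¬ ReachOutside G T g c) →
          ∃ X, IsMoplex G X ∧ X ⊆ C := by
        intro g hgC hgT hgoodg c hcC hcex
        set C0 : Set V := {y | ReachOutside G T g y} with hC0def
        have hC0sub : C0 ⊆ C := by
          intro y hy
          obtain ⟨pw, hpw⟩ := hy
          have hpw' : ∀ z ∈ pw.support, z ∉ setNbhd G C := by
            intro z hz hzN
            by_cases hzT : z ∈ T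
            · exact hpw z hz hzT
            · exact hgoodg z hzN hzT (reach_of_mem_support pw hpw z hz)
          exact support_subset_of_closed pw hgC hpw' y pw.end_mem_support
        have hcC0 : c ∉ C0 := by
          rcases hcex with hcT | hnc
          · exact fun hc => reach_right_not_mem hc hcT
          · exact hnc
        have hssub : C0 ⊂ C := ⟨hC0sub, fun hCC0 => hcC0 (hCC0 hcC)⟩
        have hcard0 : C0.ncard ≤ n := by
          have h1 := Set.ncard_lt_ncard hssub C.toFinite
          omega
        obtain ⟨X, hX, hXsub⟩ := ih C0 hcard0 (prep hpq hTmin hgT)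
        exact ⟨X, hX, hXsub.trans hC0sub⟩
      rcases hgood with hg | hg
      · rcases hqinfo with hqC | ⟨hqN, c1, hc1C, hqc1, hclique⟩
        · exact hstep p hpC hpT hg q hqC (Or.inr hTmin.1.2.2.2)
        · have hc1T : c1 ∈ T := by
            by_contra hc1T
            have hc1p : c1 ≠ p := fun e => hnadj ((e ▸ hqc1).symm)
            apply hTmin.1.2.2.2
            exact reach_trans_s6 (adj_reach (hclique hpC hc1C (Ne.symm hc1p)) hpT hc1T)
              (adj_reach hqc1.symm hc1T hqT)
          exact hstep p hpC hpT hg c1 hc1C (Or.inl hc1T)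
      · rcases hqinfo with hqC | ⟨hqN, -⟩
        · exact hstep q hqC hqT hg p hpC
            (Or.inr fun hr => hTmin.1.2.2.2 (reach_symm hr))
        · exact absurd (reach_refl hqT) (hg q hqN hqT)

lemma final_parts {U' W' : Set V} (hmin : IsMinSeparator G u v S)
    (hU : U' ⊆ {y | ReachOutside G S u y}) (hW : W' ⊆ {y | ReachOutside G S v y}) :
    (∀ a ∈ U', a ∉ S) ∧ (∀ b ∈ W', b ∉ S) ∧
      (∀ a ∈ U', ∀ b ∈ W', ¬ ReachOutside G S a b) := by
  refine ⟨fun a ha => reach_right_not_mem (hU ha), fun b hb => reach_right_not_mem (hW hb),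
    fun a ha b hb hr => ?_⟩
  exact hmin.1.2.2.2 (reach_trans_s6 (hU ha) (reach_trans_s6 hr (reach_symm (hW hb))))

end AuxLemmas

/-- In a non-complete graph with exactly two moplexes `U` and `W`, for every minimal
separator `S`, the graph `G - S` has exactly two components, one containing `U` and
the other containing `W`. -/
theorem twoMoplexes_minSep_two_components {V : Type*} [Fintype V] (G : SimpleGraph V)
    (U W : Set V) (hnc : NonComplete G) (h : HasExactlyTwoMoplexes G U W)
    (S : Set V) (hS : IsMinimalSeparator G S) :
    (∀ u ∈ U, u ∉ S) ∧ (∀ w ∈ W, w ∉ S) ∧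
    (∀ u ∈ U, ∀ w ∈ W, ¬ ReachOutside G S u w) ∧
    (∀ x, x ∉ S → (∃ u ∈ U, ReachOutside G S x u) ∨ (∃ w ∈ W, ReachOutside G S x w)) := by
  obtain ⟨u, v, huv, hmin⟩ := hS
  have huS : u ∉ S := hmin.1.2.1
  have hvS : v ∉ S := hmin.1.2.2.1
  obtain ⟨Xu, hXu, hXuCu⟩ :=
    key ({y | ReachOutside G S u y}).ncard _ le_rfl (prep huv hmin huS)
  obtain ⟨Xv, hXv, hXvCv⟩ :=
    key ({y | ReachOutside G S v y}).ncard _ le_rfl (prep huv hmin hvS)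
  have hXune : Xu ≠ Xv := by
    obtain ⟨z, hz⟩ := hXu.1
    intro e
    exact hmin.1.2.2.2 (reach_trans_s6 (hXuCu hz) (reach_symm (hXvCv (e ▸ hz))))
  have hpart4 : ∀ x, x ∉ S →
      (∃ a ∈ U, ReachOutside G S x a) ∨ (∃ b ∈ W, ReachOutside G S x b) := by
    intro x hx
    obtain ⟨X, hX, hXsub⟩ :=
      key ({y | ReachOutside G S x y}).ncard _ le_rfl (prep huv hmin hx)
    obtain ⟨z, hz⟩ := hX.1
    rcases h.2.2.2 X hX with rfl | rfl
    · exact Or.inl ⟨z, hz, hXsub hz⟩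
    · exact Or.inr ⟨z, hz, hXsub hz⟩
  rcases h.2.2.2 Xu hXu with rfl | rfl <;> rcases h.2.2.2 Xv hXv with rfl | rfl
  · exact absurd rfl hXune
  · obtain ⟨h1, h2, h3⟩ := final_parts hmin hXuCu hXvCv
    exact ⟨h1, h2, h3, hpart4⟩
  · obtain ⟨h1, h2, h3⟩ := final_parts (isMinSeparator_symm hmin) hXvCv hXuCu
    exact ⟨h1, h2, h3, hpart4⟩
  · exact absurd rfl hXune

end MoplexPaper
end
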